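/- Let G be a simple graph on vertex set {1,...,n} with m edges and graph polynomial P_G(x_1,...,x_n) = ∏_{(i,j)∈E, i<j} (x_i − x_j). Let f : {1,...,n} → ℕ⁺ satisfy ∑_i f(i) = m + n, and let C_f be the set of proper colorings c : {1,...,n} → {0,1,...,max_i f(i) − 1} of G. Then the coefficient of ∏_{i=1}^n x_i^{f(i)−1} in P_G is nonzero if and only if ∑_{c ∈ C_f} (-1)^{c(1)+⋯+c(n)} ∏_{i=1}^n C(f(i)−1, c(i)) · P_G(c(1),...,c(n)) ≠ 0. -/

import Mathlib

open MvPolynomial Finset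

/-- The graph polynomial `P_G = ∏_{(i,j) ∈ E, i < j} (xᵢ - xⱼ)`. -/
noncomputable def graphPoly {V : Type} [Fintype V] [LinearOrder V] (G : SimpleGraph V)
    [DecidableRel G.Adj] : MvPolynomial V ℝ :=
  ∏ p ∈ Finset.univ.filter (fun p : V × V => p.1 < p.2 ∧ G.Adj p.1 p.2), (X p.1 - X p.2)

/-- `G` is Alon–Tarsi `k`-choosable: `P_G` has a monomial with non-zero coefficient all of whose
exponents are at most `k - 1`. -/
def IsAT {V : Type} [Fintype V] [LinearOrder V] (G : SimpleGraph V) [DecidableRel G.Adj]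
    (k : ℕ) : Prop :=
  ∃ t : V →₀ ℕ, (graphPoly G).coeff t ≠ 0 ∧ ∀ i, t i + 1 ≤ k

/-- The Alon–Tarsi number of `G`: the least `k` such that `G` is Alon–Tarsi `k`-choosable. -/
noncomputable def ATnum {V : Type} [Fintype V] [LinearOrder V] (G : SimpleGraph V)
    [DecidableRel G.Adj] : ℕ :=
  sInf {k | IsAT G k}

lemma altsum_rec (d t : ℕ) :
    ∑ j ∈ Finset.range (d + 2), (-1 : ℝ) ^ j * ((d + 1).choose j) * (j : ℝ) ^ t
      = (∑ j ∈ Finset.range (d + 1), (-1 : ℝ) ^ j * (d.choose j) * (j : ℝ) ^ t)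
        - ∑ s ∈ Finset.range (t + 1), (t.choose s : ℝ) *
            ∑ j ∈ Finset.range (d + 1), (-1 : ℝ) ^ j * (d.choose j) * (j : ℝ) ^ s := by
  have expand : ∀ j : ℕ, ((j : ℝ) + 1) ^ t
      = ∑ s ∈ Finset.range (t + 1), (j : ℝ) ^ s * (t.choose s : ℝ) := by
    intro j
    rw [add_pow]
    simp
  have hB : ∑ j ∈ Finset.range (d + 1), (-1 : ℝ) ^ (j+1) * (d.choose j) * ((j : ℝ) + 1) ^ t
      = - ∑ s ∈ Finset.range (t + 1), (t.choose s : ℝ) *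
            ∑ j ∈ Finset.range (d + 1), (-1 : ℝ) ^ j * (d.choose j) * (j : ℝ) ^ s := by
    calc ∑ j ∈ Finset.range (d + 1), (-1 : ℝ) ^ (j+1) * (d.choose j) * ((j : ℝ) + 1) ^ t
        = ∑ j ∈ Finset.range (d + 1), ∑ s ∈ Finset.range (t + 1),
            -((t.choose s : ℝ) * ((-1 : ℝ) ^ j * (d.choose j) * (j : ℝ) ^ s)) := by
          refine Finset.sum_congr rfl fun j _ => ?_
          rw [expand j, Finset.mul_sum]
          exact Finset.sum_congr rfl fun s _ => by ring
      _ = - ∑ s ∈ Finset.range (t + 1), (t.choose s : ℝ) *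
            ∑ j ∈ Finset.range (d + 1), (-1 : ℝ) ^ j * (d.choose j) * (j : ℝ) ^ s := by
          rw [Finset.sum_comm]
          simp [Finset.mul_sum]
  have hA : (∑ j ∈ Finset.range (d + 1),
        (-1 : ℝ) ^ (j+1) * (d.choose (j+1)) * ((j+1 : ℕ) : ℝ) ^ t)
        + (-1 : ℝ) ^ 0 * (d.choose 0) * ((0:ℕ) : ℝ) ^ t
      = ∑ j ∈ Finset.range (d + 1), (-1 : ℝ) ^ j * (d.choose j) * (j : ℝ) ^ t := by
    rw [← Finset.sum_range_succ' (fun j => (-1 : ℝ) ^ j * (d.choose j) * (j : ℝ) ^ t) (d+1),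
      Finset.sum_range_succ (fun j => (-1 : ℝ) ^ j * (d.choose j) * (j : ℝ) ^ t) (d+1),
      Nat.choose_succ_self]
    simp
  rw [Finset.sum_range_succ' (fun j => (-1 : ℝ) ^ j * ((d+1).choose j) * (j : ℝ) ^ t) (d+1)]
  have split : ∀ j ∈ Finset.range (d+1),
      (-1 : ℝ) ^ (j+1) * (((d+1).choose (j+1) : ℕ) : ℝ) * ((j+1 : ℕ) : ℝ) ^ t
      = (-1 : ℝ) ^ (j+1) * (d.choose (j+1)) * ((j+1 : ℕ) : ℝ) ^ t
        + (-1 : ℝ) ^ (j+1) * (d.choose j) * ((j : ℝ) + 1) ^ t := by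
    intro j _
    push_cast [Nat.choose_succ_succ]
    ring
  rw [Finset.sum_congr rfl split, Finset.sum_add_distrib, hB]
  rw [← hA]
  simp only [Nat.choose_zero_right]
  push_cast
  ring

lemma altsum (d : ℕ) : ∀ t : ℕ, t ≤ d →
    ∑ j ∈ Finset.range (d + 1), (-1 : ℝ) ^ j * (d.choose j) * (j : ℝ) ^ t
      = if t = d then (-1 : ℝ) ^ d * d.factorial else 0 := by
  induction d with
  | zero =>
      intro t ht
      interval_cases t
      simp
  | succ d ih =>
      intro t ht
      rw [show d + 1 + 1 = d + 2 from rfl, altsum_rec d t]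
      rcases Nat.lt_or_ge t (d+1) with h | h
      · -- t ≤ d
        have ht' : t ≤ d := Nat.lt_succ_iff.mp h
        have hsum2 : ∑ s ∈ Finset.range (t + 1), (t.choose s : ℝ) *
            ∑ j ∈ Finset.range (d + 1), (-1 : ℝ) ^ j * (d.choose j) * (j : ℝ) ^ s
            = if t = d then (-1 : ℝ) ^ d * d.factorial else 0 := by
          rcases eq_or_ne t d with rfl | hne
          · rw [Finset.sum_eq_single t]
            · rw [ih t le_rfl, if_pos rfl, Nat.choose_self]; push_cast; ring
            · intro s hs hne'
              have hs' := Finset.mem_range.mp hs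
              rw [ih s (by omega), if_neg (by omega), mul_zero]
            · intro h'; exact absurd (Finset.self_mem_range_succ t) h'
          · rw [if_neg hne]
            apply Finset.sum_eq_zero
            intro s hs
            have hs' := Finset.mem_range.mp hs
            rw [ih s (by omega), if_neg (by omega), mul_zero]
        rw [ih t ht', hsum2, sub_self, if_neg (by omega)]
      · -- t = d + 1
        have ht' : t = d + 1 := le_antisymm ht h
        subst ht'
        rw [if_pos rfl]
        have e1 : ∑ s ∈ Finset.range (d + 1 + 1), ((d+1).choose s : ℝ) *
              ∑ j ∈ Finset.range (d + 1), (-1 : ℝ) ^ j * (d.choose j) * (j : ℝ) ^ s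
            = (∑ s ∈ Finset.range (d + 1), ((d+1).choose s : ℝ) *
              ∑ j ∈ Finset.range (d + 1), (-1 : ℝ) ^ j * (d.choose j) * (j : ℝ) ^ s)
              + ∑ j ∈ Finset.range (d + 1), (-1 : ℝ) ^ j * (d.choose j) * (j : ℝ) ^ (d+1) := by
          rw [Finset.sum_range_succ (fun s => ((d+1).choose s : ℝ) *
              ∑ j ∈ Finset.range (d + 1), (-1 : ℝ) ^ j * (d.choose j) * (j : ℝ) ^ s) (d+1),
            Nat.choose_self]
          push_cast
          ring
        have e2 : ∑ s ∈ Finset.range (d + 1), ((d+1).choose s : ℝ) *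
              ∑ j ∈ Finset.range (d + 1), (-1 : ℝ) ^ j * (d.choose j) * (j : ℝ) ^ s
            = ((d+1) : ℝ) * ((-1 : ℝ) ^ d * d.factorial) := by
          rw [Finset.sum_range_succ (fun s => ((d+1).choose s : ℝ) *
              ∑ j ∈ Finset.range (d + 1), (-1 : ℝ) ^ j * (d.choose j) * (j : ℝ) ^ s) d]
          have h0 : ∑ s ∈ Finset.range d, ((d+1).choose s : ℝ) *
              ∑ j ∈ Finset.range (d + 1), (-1 : ℝ) ^ j * (d.choose j) * (j : ℝ) ^ s = 0 := by
            apply Finset.sum_eq_zero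
            intro s hs
            have hs' := Finset.mem_range.mp hs
            rw [ih s (by omega), if_neg (by omega), mul_zero]
          rw [h0, ih d le_rfl, if_pos rfl, Nat.choose_succ_self_right]
          push_cast
          ring
        rw [e1, e2]
        push_cast [Nat.factorial_succ]
        ring

lemma altsum_trunc (N d t : ℕ) (h : d < N) :
    ∑ j ∈ Finset.range N, (-1 : ℝ) ^ j * (d.choose j) * (j : ℝ) ^ t
      = ∑ j ∈ Finset.range (d + 1), (-1 : ℝ) ^ j * (d.choose j) * (j : ℝ) ^ t := by
  symm
  apply Finset.sum_subset
  · intro x hx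
    simp only [Finset.mem_range] at *
    omega
  · intro x hx hx2
    simp only [Finset.mem_range, not_lt] at hx2
    rw [Nat.choose_eq_zero_of_lt (by omega)]
    simp

lemma card_pairs {n : ℕ} (G : SimpleGraph (Fin n)) [DecidableRel G.Adj] :
    (Finset.univ.filter (fun p : Fin n × Fin n => p.1 < p.2 ∧ G.Adj p.1 p.2)).card
      = G.edgeFinset.card := by
  refine Finset.card_bij (fun (p : Fin n × Fin n) _ => s(p.1, p.2)) ?_ ?_ ?_
  · rintro ⟨a, b⟩ hab
    simp only [Finset.mem_filter] at hab
    simpa [SimpleGraph.mem_edgeFinset] using hab.2.2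
  · rintro ⟨a, b⟩ hab ⟨c, e⟩ hce h
    simp only [Finset.mem_filter] at hab hce
    rw [Sym2.mk_eq_mk_iff] at h
    rcases h with h | h
    · exact h
    · simp only [Prod.swap_prod_mk, Prod.mk.injEq] at h
      exfalso
      have := hab.2.1
      have := hce.2.1
      omega
  · intro e he
    rw [SimpleGraph.mem_edgeFinset] at he
    induction e with
    | _ a b =>
      have hadj : G.Adj a b := he
      rcases lt_or_gt_of_ne hadj.ne with hlt | hgt
      · exact ⟨(a, b), by simp [hlt, hadj], rfl⟩
      · exact ⟨(b, a), by simp [hgt, hadj.symm], Sym2.eq_swap⟩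

lemma graphPoly_homog {n : ℕ} (G : SimpleGraph (Fin n)) [DecidableRel G.Adj] :
    (graphPoly G).IsHomogeneous G.edgeFinset.card := by
  rw [← card_pairs G]
  unfold graphPoly
  rw [Finset.card_eq_sum_ones]
  exact MvPolynomial.IsHomogeneous.prod _ _ _ fun p _ =>
    (isHomogeneous_X ℝ p.1).sub (isHomogeneous_X ℝ p.2)

/-- Theorem (signed colorings characterization). For a graph `G` on `{1,…,n}` with `m` edges and
`f : V → ℕ⁺` with `∑ f(i) = m + n`, the coefficient of `∏ xᵢ^{f(i)-1}` in `P_G` is non-zero iff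
`∑_{c ∈ C_f} (-1)^{∑ c(i)} ∏ C(f(i)-1, c(i)) · P_G(c(1),…,c(n)) ≠ 0`, where `C_f` is the set of
proper colorings of `G` with colors `{0,…,maxᵢ f(i) - 1}`. -/
theorem coeff_ne_zero_iff_signed_coloring_sum (n : ℕ) (G : SimpleGraph (Fin n))
    [DecidableRel G.Adj] (f : Fin n → ℕ) (hf : ∀ i, 1 ≤ f i)
    (hsum : ∑ i, f i = G.edgeFinset.card + n) :
    (graphPoly G).coeff (Finsupp.equivFunOnFinite.symm fun i => f i - 1) ≠ 0 ↔
      ∑ c ∈ (Fintype.piFinset fun _ : Fin n => Finset.range (Finset.univ.sup f)).filter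
          (fun c => ∀ i j, G.Adj i j → c i ≠ c j),
        (-1 : ℝ) ^ (∑ i, c i) * (∏ i, ((f i - 1).choose (c i) : ℝ)) *
          MvPolynomial.eval (fun i => (c i : ℝ)) (graphPoly G) ≠ 0 := by
  set N := Finset.univ.sup f with hN
  set D : Fin n →₀ ℕ := Finsupp.equivFunOnFinite.symm fun i => f i - 1 with hD
  have hDapp : ∀ i, D i = f i - 1 := fun i => rfl
  set P := graphPoly G with hP
  set m := G.edgeFinset.card with hm
  have hdN : ∀ i, f i - 1 < N := by
    intro i
    have : f i ≤ N := Finset.le_sup (Finset.mem_univ i)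
    have := hf i
    omega
  -- step 1 : remove the filter
  have hev : ∀ c : Fin n → ℕ, ¬ (∀ i j, G.Adj i j → c i ≠ c j) →
      MvPolynomial.eval (fun i => (c i : ℝ)) P = 0 := by
    intro c hc
    push_neg at hc
    obtain ⟨i, j, hadj, hceq⟩ := hc
    rw [hP]
    unfold graphPoly
    rw [map_prod]
    rcases lt_or_gt_of_ne hadj.ne with hlt | hgt
    · apply Finset.prod_eq_zero (i := (i, j)) (by simp [hlt, hadj])
      simp [hceq]
    · apply Finset.prod_eq_zero (i := (j, i)) (by simp [hgt, hadj.symm])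
      simp [hceq]
  rw [Finset.sum_filter_of_ne (fun c _ hne => by
    by_contra hcp
    exact hne (by rw [hev c hcp, mul_zero]))]
  -- step 2 : rewrite the total sum
  have key : ∑ c ∈ Fintype.piFinset (fun _ : Fin n => Finset.range N),
      (-1 : ℝ) ^ (∑ i, c i) * (∏ i, ((f i - 1).choose (c i) : ℝ)) *
        MvPolynomial.eval (fun i => (c i : ℝ)) P
      = P.coeff D * ∏ i : Fin n, ((-1 : ℝ) ^ (f i - 1) * (f i - 1).factorial) := by
    have step1 : ∀ c : Fin n → ℕ,
        (-1 : ℝ) ^ (∑ i, c i) * (∏ i, ((f i - 1).choose (c i) : ℝ)) *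
          MvPolynomial.eval (fun i => (c i : ℝ)) P
        = ∑ t ∈ P.support, P.coeff t *
            ∏ i, ((-1 : ℝ) ^ (c i) * ((f i - 1).choose (c i) : ℝ) * ((c i : ℝ)) ^ (t i)) := by
      intro c
      rw [MvPolynomial.eval_eq', Finset.mul_sum]
      refine Finset.sum_congr rfl fun t _ => ?_
      rw [← Finset.prod_pow_eq_pow_sum, Finset.prod_mul_distrib, Finset.prod_mul_distrib]
      ring
    rw [Finset.sum_congr rfl fun c _ => step1 c, Finset.sum_comm]
    have step2 : ∀ t : Fin n →₀ ℕ,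
        ∑ c ∈ Fintype.piFinset (fun _ : Fin n => Finset.range N),
          P.coeff t * ∏ i, ((-1 : ℝ) ^ (c i) * ((f i - 1).choose (c i) : ℝ) * ((c i : ℝ)) ^ (t i))
        = P.coeff t * ∏ i, ∑ j ∈ Finset.range (f i - 1 + 1),
            (-1 : ℝ) ^ j * ((f i - 1).choose j : ℝ) * (j : ℝ) ^ (t i) := by
      intro t
      rw [← Finset.mul_sum, ← Finset.prod_univ_sum (fun _ : Fin n => Finset.range N)
        (fun i j => (-1 : ℝ) ^ j * ((f i - 1).choose j : ℝ) * (j : ℝ) ^ (t i))]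
      congr 1
      exact Finset.prod_congr rfl fun i _ => altsum_trunc N (f i - 1) (t i) (hdN i)
    rw [Finset.sum_congr rfl fun t _ => step2 t]
    -- now single out t = D
    have hWD : ∀ i : Fin n, ∑ j ∈ Finset.range (f i - 1 + 1),
          (-1 : ℝ) ^ j * ((f i - 1).choose j : ℝ) * (j : ℝ) ^ (D i)
        = (-1 : ℝ) ^ (f i - 1) * ((f i - 1).factorial : ℝ) := by
      intro i
      rw [hDapp, altsum (f i - 1) (f i - 1) le_rfl, if_pos rfl]
    have hfs : ∑ i : Fin n, (f i - 1) = m := by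
      have he : ∑ i : Fin n, f i = ∑ i : Fin n, ((f i - 1) + 1) :=
        Finset.sum_congr rfl fun i _ => by have := hf i; omega
      rw [he, Finset.sum_add_distrib, Finset.sum_const, Finset.card_univ, Fintype.card_fin,
        smul_eq_mul, mul_one] at hsum
      omega
    have hzero : ∀ t ∈ P.support, t ≠ D →
        P.coeff t * ∏ i, ∑ j ∈ Finset.range (f i - 1 + 1),
          (-1 : ℝ) ^ j * ((f i - 1).choose j : ℝ) * (j : ℝ) ^ (t i) = 0 := by
      intro t hts htD
      have hdegt : t.degree = ∑ i, t i :=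
        Finset.sum_subset (Finset.subset_univ _)
          (fun i _ hi => Finsupp.notMem_support_iff.mp hi)
      have hdeg : ∑ i, t i = m := by
        by_contra hne
        exact (MvPolynomial.mem_support_iff.mp hts)
          ((graphPoly_homog G).coeff_eq_zero (by rw [hdegt]; exact hne))
      have hex : ¬ ∀ i, f i - 1 ≤ t i := by
        intro hall
        apply htD
        refine Finsupp.ext fun i => ?_
        have heq : ∑ i : Fin n, (f i - 1) = ∑ i : Fin n, t i := by rw [hfs, hdeg]
        have := (Finset.sum_eq_sum_iff_of_le (fun i _ => hall i)).mp heq i (Finset.mem_univ i)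
        rw [hDapp]
        omega
      push_neg at hex
      obtain ⟨i₀, hlt⟩ := hex
      apply mul_eq_zero_of_right
      apply Finset.prod_eq_zero (Finset.mem_univ i₀)
      rw [altsum (f i₀ - 1) (t i₀) (le_of_lt hlt), if_neg (by omega)]
    by_cases hDs : D ∈ P.support
    · rw [Finset.sum_eq_single_of_mem D hDs (fun t hts htD => hzero t hts htD)]
      rw [Finset.prod_congr rfl fun i _ => hWD i]
    · rw [Finset.sum_eq_zero (fun t hts => by
        rcases eq_or_ne t D with rfl | htD
        · exact absurd hts hDs
        · exact hzero t hts htD),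
        MvPolynomial.notMem_support_iff.mp hDs, zero_mul]
  rw [key]
  have hne : (∏ i : Fin n, ((-1 : ℝ) ^ (f i - 1) * (f i - 1).factorial)) ≠ 0 := by
    apply Finset.prod_ne_zero_iff.mpr
    intro i _
    positivity
  constructor
  · intro h; exact mul_ne_zero h hne
  · intro h hc; exact h (by rw [hc, zero_mul])
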